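/- Let A be a real m×n matrix of rank m and let b ∈ ℝᵐ with b ≠ 0. Then the minimum in the primal problem min{‖z‖₁ : A z = b} and the minimum in the dual problem min{‖Aᵀh‖_∞ : ⟨b, h⟩ = 1} are both attained and positive, and their values p and d satisfy p·d = 1, i.e. min{‖z‖₁ : Az = b} = 1 / min{‖Aᵀh‖_∞ : ⟨b, h⟩ = 1}. -/

import Mathlib

open Finset

noncomputable section Stmt19Aux

/-- ℓ¹ norm helper. -/
def sl1 {n : ℕ} (z : Fin n → ℝ) : ℝ := ∑ j, |z j|

lemma sl1_nonneg {n : ℕ} (z : Fin n → ℝ) : 0 ≤ sl1 z :=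
  Finset.sum_nonneg fun j _ => abs_nonneg _

lemma sl1_continuous {n : ℕ} : Continuous (sl1 (n := n)) := by
  unfold sl1
  exact continuous_finset_sum _ fun j _ => (continuous_abs.comp (continuous_apply j))

lemma sl1_eq_zero {n : ℕ} {z : Fin n → ℝ} (h : sl1 z = 0) : z = 0 := by
  funext j
  have := (Finset.sum_eq_zero_iff_of_nonneg (fun j _ => abs_nonneg (z j))).1 h j (mem_univ j)
  simpa [abs_eq_zero] using this

lemma sl1_add_le {n : ℕ} (z w : Fin n → ℝ) : sl1 (z + w) ≤ sl1 z + sl1 w := by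
  unfold sl1
  rw [← Finset.sum_add_distrib]
  exact Finset.sum_le_sum fun j _ => abs_add_le _ _

lemma sl1_smul {n : ℕ} (c : ℝ) (z : Fin n → ℝ) : sl1 (c • z) = |c| * sl1 z := by
  unfold sl1
  rw [Finset.mul_sum]
  exact Finset.sum_congr rfl fun j _ => by simp [abs_mul]

lemma sl1_neg {n : ℕ} (z : Fin n → ℝ) : sl1 (-z) = sl1 z := by
  have := sl1_smul (-1 : ℝ) z
  simpa using this

/-- Minimum ℓ¹ norm over solutions of `A z = y` is attained. -/
lemma exists_sl1_min {m n : ℕ} (A : Matrix (Fin m) (Fin n) ℝ) (y : Fin m → ℝ)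
    (hy : ∃ z, A.mulVec z = y) :
    ∃ z₀, A.mulVec z₀ = y ∧ ∀ z, A.mulVec z = y → sl1 z₀ ≤ sl1 z := by
  obtain ⟨z₁, hz₁⟩ := hy
  set C := sl1 z₁ with hC
  set K : Set (Fin n → ℝ) := {z | A.mulVec z = y ∧ sl1 z ≤ C} with hK
  have hz₁K : z₁ ∈ K := ⟨hz₁, le_refl _⟩
  have hc : Continuous fun z : Fin n → ℝ => A.mulVec z := by
    have := LinearMap.continuous_of_finiteDimensional (A.mulVecLin)
    exact this
  have hclosed : IsClosed K :=
    (isClosed_eq hc continuous_const).inter (isClosed_le sl1_continuous continuous_const)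
  have hsub : K ⊆ Metric.closedBall 0 C := by
    intro z hz
    rw [Metric.mem_closedBall, dist_zero_right]
    have hCnn : 0 ≤ C := le_trans (sl1_nonneg z) hz.2
    rw [pi_norm_le_iff_of_nonneg hCnn]
    intro j
    have h1 : |z j| ≤ sl1 z :=
      Finset.single_le_sum (fun j _ => abs_nonneg (z j)) (mem_univ j)
    simpa [Real.norm_eq_abs] using le_trans h1 hz.2
  have hcompact : IsCompact K :=
    (isCompact_closedBall (0 : Fin n → ℝ) C).of_isClosed_subset hclosed hsub
  obtain ⟨z₀, hz₀K, hmin⟩ := hcompact.exists_isMinOn ⟨z₁, hz₁K⟩ sl1_continuous.continuousOn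
  have hmin' := isMinOn_iff.mp hmin
  refine ⟨z₀, hz₀K.1, fun z hz => ?_⟩
  by_cases hzC : sl1 z ≤ C
  · exact hmin' z ⟨hz, hzC⟩
  · exact le_trans (hmin' z₁ hz₁K) (le_of_not_ge hzC)

/-- Quotient norm candidate. -/
def qnorm {m n : ℕ} (A : Matrix (Fin m) (Fin n) ℝ) (y : Fin m → ℝ) : ℝ :=
  sInf {r | ∃ z, A.mulVec z = y ∧ r = sl1 z}

lemma isLeast_qnorm {m n : ℕ} {A : Matrix (Fin m) (Fin n) ℝ}
    (hsurj : Function.Surjective A.mulVec) (y : Fin m → ℝ) :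
    IsLeast {r | ∃ z, A.mulVec z = y ∧ r = sl1 z} (qnorm A y) := by
  obtain ⟨z₀, hz₀, hmin⟩ := exists_sl1_min A y (hsurj y)
  have hL : IsLeast {r | ∃ z, A.mulVec z = y ∧ r = sl1 z} (sl1 z₀) :=
    ⟨⟨z₀, hz₀, rfl⟩, by rintro r ⟨z, hz, rfl⟩; exact hmin z hz⟩
  rw [qnorm, hL.csInf_eq]
  exact hL

lemma qnorm_le {m n : ℕ} {A : Matrix (Fin m) (Fin n) ℝ}
    (hsurj : Function.Surjective A.mulVec) {y : Fin m → ℝ} {z : Fin n → ℝ}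
    (hz : A.mulVec z = y) : qnorm A y ≤ sl1 z :=
  (isLeast_qnorm hsurj y).2 ⟨z, hz, rfl⟩

lemma qnorm_witness {m n : ℕ} {A : Matrix (Fin m) (Fin n) ℝ}
    (hsurj : Function.Surjective A.mulVec) (y : Fin m → ℝ) :
    ∃ z, A.mulVec z = y ∧ qnorm A y = sl1 z :=
  (isLeast_qnorm hsurj y).1

/-- Type synonym of `Fin m → ℝ` carrying the quotient norm. -/
def QSp (m : ℕ) : Type := Fin m → ℝ

instance {m : ℕ} : AddCommGroup (QSp m) := Pi.addCommGroup
instance {m : ℕ} : Module ℝ (QSp m) := Pi.module _ _ _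

/-- The quotient norm as an `AddGroupNorm` on the synonym. -/
def qAGN {m n : ℕ} (A : Matrix (Fin m) (Fin n) ℝ)
    (hsurj : Function.Surjective A.mulVec) : AddGroupNorm (QSp m) where
  toFun y := qnorm A y
  map_zero' := by
    show qnorm A (0 : Fin m → ℝ) = 0
    apply le_antisymm
    · have := qnorm_le (A := A) hsurj (z := (0 : Fin n → ℝ)) (y := (0 : Fin m → ℝ))
        (Matrix.mulVec_zero A)
      simpa [sl1] using this
    · obtain ⟨z, _, hq⟩ := qnorm_witness hsurj (0 : Fin m → ℝ)
      rw [hq]; exact sl1_nonneg z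
  add_le' y₁ y₂ := by
    obtain ⟨z₁, hz₁, hq₁⟩ := qnorm_witness hsurj y₁
    obtain ⟨z₂, hz₂, hq₂⟩ := qnorm_witness hsurj y₂
    have hfe : A.mulVec (z₁ + z₂) = y₁ + y₂ := by
      show A.mulVec (z₁ + z₂) = (y₁ : Fin m → ℝ) + (y₂ : Fin m → ℝ)
      rw [Matrix.mulVec_add, hz₁, hz₂]
      rfl
    calc qnorm A (y₁ + y₂) ≤ sl1 (z₁ + z₂) := qnorm_le hsurj hfe
      _ ≤ sl1 z₁ + sl1 z₂ := sl1_add_le _ _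
      _ = qnorm A y₁ + qnorm A y₂ := by rw [hq₁, hq₂]
  neg' y := by
    have key : ∀ w : Fin m → ℝ, qnorm A (-w) ≤ qnorm A w := by
      intro w
      obtain ⟨z, hz, hq⟩ := qnorm_witness hsurj w
      have hfe : A.mulVec (-z) = -w := by rw [Matrix.mulVec_neg, hz]
      calc qnorm A (-w) ≤ sl1 (-z) := qnorm_le hsurj hfe
        _ = sl1 z := sl1_neg z
        _ = qnorm A w := hq.symm
    have h2 := key (-y)
    exact le_antisymm (key y) (le_trans (le_of_eq (congrArg (qnorm A) (neg_neg y).symm)) h2)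
  eq_zero_of_map_eq_zero' y hy := by
    obtain ⟨z, hz, hq⟩ := qnorm_witness hsurj y
    have hy' : qnorm A y = 0 := hy
    rw [hy'] at hq
    have hz0 : z = 0 := sl1_eq_zero hq.symm
    rw [hz0, Matrix.mulVec_zero] at hz
    exact hz.symm

end Stmt19Aux

/-- LP duality for the minimum-ℓ₁-norm solution of `Az = b`:
both the primal and the dual minima are attained and positive, and their product is 1.
Here `Fin n → ℝ` carries the sup (ℓ∞) norm, so `‖A.transpose.mulVec h‖` is the ℓ∞ norm. -/
theorem stmt19 {m n : ℕ} (A : Matrix (Fin m) (Fin n) ℝ) (hrank : A.rank = m)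
    (b : Fin m → ℝ) (hb : b ≠ 0) :
    ∃ p d : ℝ,
      IsLeast {r : ℝ | ∃ z : Fin n → ℝ, A.mulVec z = b ∧ r = ∑ j, |z j|} p ∧
      IsLeast {r : ℝ | ∃ h : Fin m → ℝ, (∑ i, b i * h i) = 1 ∧ r = ‖A.transpose.mulVec h‖} d ∧
      0 < p ∧ 0 < d ∧ p * d = 1 := by
  classical
  -- surjectivity of `A.mulVec`
  have hsurj : Function.Surjective A.mulVec := by
    have hrange : LinearMap.range A.mulVecLin = ⊤ := by
      apply Submodule.eq_top_of_finrank_eq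
      rw [← Matrix.rank, hrank]
      simp
    intro y
    have : y ∈ LinearMap.range A.mulVecLin := by rw [hrange]; trivial
    obtain ⟨z, hz⟩ := this
    exact ⟨z, hz⟩
  -- primal optimum
  obtain ⟨zs, hzs, hzsmin⟩ := exists_sl1_min A b ⟨_, (hsurj b).choose_spec⟩
  set p := sl1 zs with hp
  have hprimal : IsLeast {r : ℝ | ∃ z : Fin n → ℝ, A.mulVec z = b ∧ r = ∑ j, |z j|} p :=
    ⟨⟨zs, hzs, rfl⟩, by rintro r ⟨z, hz, rfl⟩; exact hzsmin z hz⟩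
  have hppos : 0 < p := by
    rcases lt_or_eq_of_le (sl1_nonneg zs) with h | h
    · exact h
    · exfalso
      have h0 : zs = 0 := sl1_eq_zero h.symm
      rw [h0, Matrix.mulVec_zero] at hzs
      exact hb hzs.symm
  have hqb : qnorm A b = p := by
    have h1 : IsLeast {r | ∃ z, A.mulVec z = b ∧ r = sl1 z} p := hprimal
    exact (isLeast_qnorm hsurj b).unique h1
  -- Hahn–Banach via the quotient norm on the synonym space
  letI : NormedAddCommGroup (QSp m) := (qAGN A hsurj).toNormedAddCommGroup
  letI : NormedSpace ℝ (QSp m) := by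
    refine ⟨fun c y => ?_⟩
    show qnorm A (c • y) ≤ ‖c‖ * qnorm A y
    obtain ⟨z, hz, hq⟩ := qnorm_witness hsurj y
    have hfe : A.mulVec (c • z) = c • (y : Fin m → ℝ) := by rw [Matrix.mulVec_smul, hz]; rfl
    calc qnorm A (c • y) ≤ sl1 (c • z) := qnorm_le hsurj hfe
      _ = |c| * sl1 z := sl1_smul c z
      _ = ‖c‖ * qnorm A y := by rw [Real.norm_eq_abs, hq]
  have hbq : (show QSp m from b) ≠ 0 := hb
  obtain ⟨g, hgnorm, hgb⟩ := exists_dual_vector ℝ (show QSp m from b) (norm_ne_zero_iff.mpr hbq)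
  set h₀ : Fin m → ℝ := fun i => g (show QSp m from Pi.single i 1) with hh₀
  have gsum : ∀ y : Fin m → ℝ, g (show QSp m from y) = ∑ i, y i * h₀ i := by
    intro y
    have hy : (show QSp m from y) = ∑ i, (y i) • (show QSp m from Pi.single i 1) := by
      show y = ∑ i, (y i) • (Pi.single i 1 : Fin m → ℝ)
      funext j
      rw [Finset.sum_apply]
      simp [Pi.single_apply, eq_comm]
    conv_lhs => rw [hy]
    rw [map_sum]
    exact Finset.sum_congr rfl fun i _ => by rw [map_smul]; rfl
  have hbh₀ : ∑ i, b i * h₀ i = p := by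
    rw [← gsum b, hgb]
    show qnorm A b = p
    exact hqb
  -- the dual vector has small values
  have hAh₀ : ∀ j, |(A.transpose.mulVec h₀) j| ≤ 1 := by
    intro j
    have hcolval : (A.transpose.mulVec h₀) j = ∑ i, (A.mulVec (Pi.single j 1)) i * h₀ i := by
      rw [Matrix.mulVec_single_one]
      simp [Matrix.mulVec, dotProduct, Matrix.transpose_apply]
    have hqcol : qnorm A (A.mulVec (Pi.single j 1)) ≤ 1 := by
      have := qnorm_le hsurj (z := Pi.single j 1) (y := A.mulVec (Pi.single j 1)) rfl
      have hs : sl1 (Pi.single j (1:ℝ)) = 1 := by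
        simp [sl1, Pi.single_apply, apply_ite (|·|)]
      rw [hs] at this; exact this
    have hle := g.le_opNorm (show QSp m from A.mulVec (Pi.single j 1))
    rw [hgnorm, one_mul] at hle
    rw [hcolval, ← gsum]
    calc |g (show QSp m from A.mulVec (Pi.single j 1))| 
        = ‖g (show QSp m from A.mulVec (Pi.single j 1))‖ := (Real.norm_eq_abs _).symm
      _ ≤ ‖(show QSp m from A.mulVec (Pi.single j 1))‖ := hle
      _ = qnorm A (A.mulVec (Pi.single j 1)) := rfl
      _ ≤ 1 := hqcol
  have hAh₀norm : ‖A.transpose.mulVec h₀‖ ≤ 1 := by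
    rw [pi_norm_le_iff_of_nonneg zero_le_one]
    intro j
    rw [Real.norm_eq_abs]
    exact hAh₀ j
  -- weak duality
  have hweak : ∀ h' : Fin m → ℝ, (∑ i, b i * h' i) = 1 → 1 ≤ p * ‖A.transpose.mulVec h'‖ := by
    intro h' hfeas
    have h1 : (1:ℝ) = ∑ j, (A.transpose.mulVec h') j * zs j := by
      rw [← hfeas]
      calc ∑ i, b i * h' i = dotProduct h' b := by
            simp [dotProduct, mul_comm]
        _ = dotProduct h' (A.mulVec zs) := by rw [hzs]
        _ = dotProduct (Matrix.vecMul h' A) zs := Matrix.dotProduct_mulVec _ _ _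
        _ = dotProduct (A.transpose.mulVec h') zs := by rw [Matrix.mulVec_transpose]
        _ = ∑ j, (A.transpose.mulVec h') j * zs j := rfl
    have h2 : ∀ j ∈ univ, (A.transpose.mulVec h') j * zs j ≤ ‖A.transpose.mulVec h'‖ * |zs j| := by
      intro j _
      calc (A.transpose.mulVec h') j * zs j ≤ |(A.transpose.mulVec h') j * zs j| := le_abs_self _
        _ = |(A.transpose.mulVec h') j| * |zs j| := abs_mul _ _
        _ ≤ ‖A.transpose.mulVec h'‖ * |zs j| := by
            apply mul_le_mul_of_nonneg_right _ (abs_nonneg _)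
            simpa [Real.norm_eq_abs] using norm_le_pi_norm (A.transpose.mulVec h') j
    calc (1:ℝ) = ∑ j, (A.transpose.mulVec h') j * zs j := h1
      _ ≤ ∑ j, ‖A.transpose.mulVec h'‖ * |zs j| := Finset.sum_le_sum h2
      _ = ‖A.transpose.mulVec h'‖ * p := by rw [← Finset.mul_sum]; rfl
      _ = p * ‖A.transpose.mulVec h'‖ := mul_comm _ _
  -- the dual feasible point
  set hv : Fin m → ℝ := p⁻¹ • h₀ with hhv
  have hfeas : ∑ i, b i * hv i = 1 := by
    have : ∑ i, b i * (p⁻¹ * h₀ i) = p⁻¹ * ∑ i, b i * h₀ i := by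
      rw [Finset.mul_sum]
      exact Finset.sum_congr rfl fun i _ => by ring
    calc ∑ i, b i * hv i = p⁻¹ * ∑ i, b i * h₀ i := this
      _ = p⁻¹ * p := by rw [hbh₀]
      _ = 1 := inv_mul_cancel₀ hppos.ne'
  have hval_le : ‖A.transpose.mulVec hv‖ ≤ p⁻¹ := by
    have h1 : A.transpose.mulVec hv = p⁻¹ • A.transpose.mulVec h₀ := by
      rw [hhv, Matrix.mulVec_smul]
    rw [h1, norm_smul, Real.norm_eq_abs, abs_of_pos (inv_pos.2 hppos)]
    calc p⁻¹ * ‖A.transpose.mulVec h₀‖ ≤ p⁻¹ * 1 :=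
          mul_le_mul_of_nonneg_left hAh₀norm (inv_pos.2 hppos).le
      _ = p⁻¹ := mul_one _
  have hcancel : ∀ x : ℝ, 1 ≤ p * x → p⁻¹ ≤ x := by
    intro x hx
    rw [inv_eq_one_div, div_le_iff₀ hppos]
    linarith [hx]
  have hval : ‖A.transpose.mulVec hv‖ = p⁻¹ :=
    le_antisymm hval_le (hcancel _ (hweak hv hfeas))
  have hdual : IsLeast {r : ℝ | ∃ h : Fin m → ℝ,
      (∑ i, b i * h i) = 1 ∧ r = ‖A.transpose.mulVec h‖} p⁻¹ := by
    constructor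
    · exact ⟨hv, hfeas, hval.symm⟩
    · rintro r ⟨h', hf, rfl⟩
      exact hcancel _ (hweak h' hf)
  exact ⟨p, p⁻¹, hprimal, hdual, hppos, inv_pos.2 hppos, mul_inv_cancel₀ hppos.ne'⟩
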